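/- For every integer n ≥ 1, in the ring R_n one has ∏_{i=1}^{n} (x_i + ε)^{2^{i−1}} = ε^{2^n − 1 − n} · ∏_{i=1}^{n} (x_i + ε). -/

import Mathlib

open MvPolynomial

/-- The ideal `I_m ⊆ 𝔽₂[x₁,…,x_m,ε]` generated by `x_j² − ε·x_j` for `j = 1,…,m`.
The variables are indexed by `Fin (m+1)`: index `0` is `ε` and index `j ≠ 0` is `x_j`. -/
noncomputable def relIdeal (m : ℕ) : Ideal (MvPolynomial (Fin (m + 1)) (ZMod 2)) :=
  Ideal.span {f : MvPolynomial (Fin (m + 1)) (ZMod 2) |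
    ∃ j : Fin (m + 1), j ≠ 0 ∧ f = X j ^ 2 - X 0 * X j}

/-- The ring `R_m = 𝔽₂[x₁,…,x_m,ε]/I_m`. -/
abbrev Rring (m : ℕ) := MvPolynomial (Fin (m + 1)) (ZMod 2) ⧸ relIdeal m

open Fin.NatCast in
/-- The image of the variable `x_j` (for `1 ≤ j ≤ m`) in `R_m`. -/
noncomputable def xv (m : ℕ) (j : ℕ) : Rring m :=
  Ideal.Quotient.mk (relIdeal m) (X (j : Fin (m + 1)))

/-- The image of the variable `ε` in `R_m`. -/
noncomputable def eps (m : ℕ) : Rring m :=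
  Ideal.Quotient.mk (relIdeal m) (X 0)

lemma two_eq_zero (n : ℕ) : (2 : Rring n) = 0 := by
  have h : (2 : MvPolynomial (Fin (n + 1)) (ZMod 2)) = 0 := by
    rw [show (2 : MvPolynomial (Fin (n + 1)) (ZMod 2)) = C 2 from (map_ofNat C 2).symm]
    rw [show (2 : ZMod 2) = 0 from rfl, map_zero]
  rw [show (2 : Rring n) = Ideal.Quotient.mk (relIdeal n) 2 from
    (map_ofNat (Ideal.Quotient.mk (relIdeal n)) 2).symm, h, map_zero]

open Fin.NatCast in
lemma xv_sq (n j : ℕ) (h1 : 1 ≤ j) (h2 : j ≤ n) :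
    xv n j ^ 2 = eps n * xv n j := by
  have hj : (j : Fin (n + 1)) ≠ 0 := by
    intro h
    have := congrArg Fin.val h
    rw [Fin.val_natCast, Nat.mod_eq_of_lt (by omega), Fin.val_zero] at this
    omega
  have hm : (X (j : Fin (n+1)) ^ 2 - X 0 * X (j : Fin (n+1)) :
      MvPolynomial (Fin (n + 1)) (ZMod 2)) ∈ relIdeal n :=
    Ideal.subset_span ⟨j, hj, rfl⟩
  have h0 := (Ideal.Quotient.eq_zero_iff_mem).2 hm
  have : xv n j ^ 2 - eps n * xv n j = 0 := by
    simpa [xv, eps, map_sub, map_mul, map_pow] using h0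
  linear_combination this

lemma sq_key (n j : ℕ) (h1 : 1 ≤ j) (h2 : j ≤ n) :
    (xv n j + eps n) ^ 2 = eps n * (xv n j + eps n) := by
  have h := xv_sq n j h1 h2
  have h2' := two_eq_zero n
  linear_combination h + (xv n j * eps n) * h2'

lemma pow_key (n j k : ℕ) (h1 : 1 ≤ j) (h2 : j ≤ n) :
    (xv n j + eps n) ^ (2 ^ k) = eps n ^ (2 ^ k - 1) * (xv n j + eps n) := by
  induction k with
  | zero => simp
  | succ k ih =>
    have h1k : 1 ≤ 2 ^ k := Nat.one_le_two_pow
    have he : (2 ^ k - 1) * 2 + 1 = 2 ^ (k + 1) - 1 := by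
      rw [pow_succ]; omega
    calc (xv n j + eps n) ^ (2 ^ (k + 1))
        = ((xv n j + eps n) ^ (2 ^ k)) ^ 2 := by rw [← pow_mul, pow_succ]
      _ = (eps n ^ (2 ^ k - 1)) ^ 2 * (xv n j + eps n) ^ 2 := by rw [ih]; ring
      _ = eps n ^ ((2 ^ k - 1) * 2) * (eps n * (xv n j + eps n)) := by
          rw [← pow_mul, sq_key n j h1 h2]
      _ = eps n ^ ((2 ^ k - 1) * 2 + 1) * (xv n j + eps n) := by ring
      _ = eps n ^ (2 ^ (k + 1) - 1) * (xv n j + eps n) := by rw [he]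

lemma sum_key (n : ℕ) : ∑ i ∈ Finset.Icc 1 n, (2 ^ (i - 1) - 1) = 2 ^ n - 1 - n := by
  induction n with
  | zero => simp
  | succ n ih =>
    have h1 : n < 2 ^ n := Nat.lt_two_pow_self
    have h2 : 2 ^ (n + 1) = 2 * 2 ^ n := by rw [pow_succ]; ring
    rw [Finset.sum_Icc_succ_top (by omega), ih]
    simp only [Nat.add_sub_cancel]
    rw [h2]
    omega

/-- For every `n ≥ 1`, in `R_n` one has
`∏_{i=1}^{n} (xᵢ + ε)^{2^{i−1}} = ε^{2^n − 1 − n} · ∏_{i=1}^{n} (xᵢ + ε)`. -/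
theorem stmt11 (n : ℕ) (hn : 1 ≤ n) :
    ∏ i ∈ Finset.Icc 1 n, (xv n i + eps n) ^ (2 ^ (i - 1))
      = eps n ^ (2 ^ n - 1 - n) * ∏ i ∈ Finset.Icc 1 n, (xv n i + eps n) := by
  have h : ∏ i ∈ Finset.Icc 1 n, (xv n i + eps n) ^ (2 ^ (i - 1))
      = ∏ i ∈ Finset.Icc 1 n, eps n ^ (2 ^ (i - 1) - 1) * (xv n i + eps n) :=
    Finset.prod_congr rfl (fun i hi =>
      pow_key n i (i - 1) (Finset.mem_Icc.mp hi).1 (Finset.mem_Icc.mp hi).2)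
  rw [h, Finset.prod_mul_distrib, Finset.prod_pow_eq_pow_sum, sum_key]
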